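/- arXiv:1901.06353 — 2 statements merged into one kernel-verified Lean document; each statement's English description precedes it below -/
import Mathlib

section
/- Let a, b, c ∈ ℂ with s := a + b + c ≠ 0, set A = bc/s, B = ca/s, C = ab/s. Let V be a finite set, let W = {v1, v2, v3} ⊔ V, and let D be an arbitrary complex matrix indexed by W. Define the matrix M indexed by {u} ⊔ W by: M(u,u) = s; M(u,v1) = M(v1,u) = −a, M(u,v2) = M(v2,u) = −b, M(u,v3) = M(v3,u) = −c; M(u,x) = M(x,u) = 0 for x ∈ V; and M(x,y) = D(x,y) + δ(x,y)·d(x) for x, y ∈ W, where d(v1) = a, d(v2) = b, d(v3) = c, and d(x) = 0 for x ∈ V. Let T be the matrix indexed by W that equals the triangle Laplacian [[B+C, −C, −B], [−C, C+A, −A], [−B, −A, A+B]] on the block {v1, v2, v3} and is zero in all other entries. Then det M = s · det(D + T). -/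
/-- Performing a Y–Δ move inside an arbitrary ambient network multiplies the determinant of
the Laplacian by `s = a + b + c`: if `M` is obtained from an arbitrary matrix `D` (indexed by
`W = Fin 3 ⊕ V`) by adjoining the star vertex `u` with conductances `a, b, c` to the three
triangle vertices, and `T` is the triangle Laplacian with conductances `A = bc/s, B = ca/s,
C = ab/s`, then `det M = s * det (D + T)`. -/
theorem yDelta_det_identity {V : Type*} [Fintype V] [DecidableEq V]
    (a b c : ℂ) (hs : a + b + c ≠ 0)
    (D : Matrix (Fin 3 ⊕ V) (Fin 3 ⊕ V) ℂ) :
    let s := a + b + c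
    let A := b * c / s
    let B := c * a / s
    let C := a * b / s
    let d : Fin 3 ⊕ V → ℂ := Sum.elim ![a, b, c] 0
    let M : Matrix (Unit ⊕ (Fin 3 ⊕ V)) (Unit ⊕ (Fin 3 ⊕ V)) ℂ :=
      Matrix.fromBlocks (Matrix.of fun _ _ => s) (Matrix.of fun _ x => -(d x))
        (Matrix.of fun x _ => -(d x)) (Matrix.of fun x y => D x y + if x = y then d x else 0)
    let T : Matrix (Fin 3 ⊕ V) (Fin 3 ⊕ V) ℂ :=
      Matrix.fromBlocks !![B + C, -C, -B; -C, C + A, -A; -B, -A, A + B] 0 0 0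
    M.det = s * (D + T).det := by
  intro s A B C d M T
  have hs' : s ≠ 0 := hs
  set Am : Matrix Unit Unit ℂ := Matrix.of fun _ _ => s with hAm
  set Bm : Matrix Unit (Fin 3 ⊕ V) ℂ := Matrix.of fun _ x => -(d x) with hBm
  set Cm : Matrix (Fin 3 ⊕ V) Unit ℂ := Matrix.of fun x _ => -(d x) with hCm
  set Dm : Matrix (Fin 3 ⊕ V) (Fin 3 ⊕ V) ℂ :=
    Matrix.of fun x y => D x y + if x = y then d x else 0 with hDm
  have hinv1 : (Matrix.of fun _ _ => s⁻¹ : Matrix Unit Unit ℂ) * Am = 1 := by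
    ext i j
    simp [Matrix.mul_apply, hAm, inv_mul_cancel₀ hs', Matrix.one_apply, Subsingleton.elim i j]
  have hinv2 : Am * (Matrix.of fun _ _ => s⁻¹ : Matrix Unit Unit ℂ) = 1 := by
    ext i j
    simp [Matrix.mul_apply, hAm, mul_inv_cancel₀ hs', Matrix.one_apply, Subsingleton.elim i j]
  letI : Invertible Am := ⟨Matrix.of fun _ _ => s⁻¹, hinv1, hinv2⟩
  have hdet : M.det = Am.det * (Dm - Cm * ⅟Am * Bm).det :=
    Matrix.det_fromBlocks₁₁ Am Bm Cm Dm
  have hAdet : Am.det = s := by simp [hAm, Matrix.det_unique]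
  have hDT : Dm - Cm * ⅟Am * Bm = D + T := by
    have hiA : (⅟Am : Matrix Unit Unit ℂ) = Matrix.of fun _ _ => s⁻¹ := rfl
    ext x y
    have hmul : (Cm * ⅟Am * Bm) x y = d x * s⁻¹ * d y := by
      simp [hiA, Matrix.mul_apply, hCm, hBm]
     
    simp only [Matrix.sub_apply, Matrix.add_apply, hmul, hDm, Matrix.of_apply]
    have : (if x = y then d x else 0) - d x * s⁻¹ * d y = T x y := by
      rcases x with x | x <;> rcases y with y | y
      · fin_cases x <;> fin_cases y <;>
          simp [T, d, A, B, C, Matrix.fromBlocks] <;> field_simp <;> ring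
      · simp [T, d, Matrix.fromBlocks]
      · simp [T, d, Matrix.fromBlocks]
      · simp [T, d, Matrix.fromBlocks, Sum.elim_inr]
    linear_combination this
  rw [hdet, hAdet, hDT]
end

section
/- Let G be a finite undirected graph with vertex set V and edge set E, let c : E → ℂ be an edge weight (conductance) function, and let φ be a connection on G, i.e., an assignment of a nonzero complex number φ_{u→v} to each directed edge (u,v) of G such that φ_{v→u} = (φ_{u→v})^{-1}. Let Δ be the line bundle Laplacian: the V × V matrix with Δ(v,v) = Σ_{u ∼ v} c(uv) and Δ(v,u) = −c(uv)·φ_{u→v} for u adjacent to v (and 0 otherwise). Then det Δ = Σ_γ (Π_{e ∈ γ} c(e)) · Π_η (1 − m(η)), where the sum is over all oriented cycle rooted spanning forests (OCRSFs) γ of G, the product over η runs over the oriented cycles of γ, and m(η) denotes the monodromy of the connection φ around the oriented cycle η, i.e., the product of the parallel transports φ along the directed edges of η. -/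
open Finset Function Equiv

set_option linter.unusedSectionVars false

namespace OCRSFAux

variable {V : Type*} [Fintype V] [DecidableEq V]

/-- periodic points, as in the statement -/
def pp (f : V → V) : Finset V :=
  Finset.univ.filter fun v =>
    ((Finset.Icc 1 (Fintype.card V)).filter fun n => f^[n] v = v).Nonempty

/-- orbit, as in the statement -/
def orb (f : V → V) (v : V) : Finset V :=
  Finset.image (fun k => f^[k] v) (Finset.range (Fintype.card V))

/-- cycles, as in the statement -/
def cyc (f : V → V) : Finset (Finset V) := Finset.image (orb f) (pp f)

lemma minimalPeriod_le_card (f : V → V) (v : V) :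
    minimalPeriod f v ≤ Fintype.card V := by
  have h := Function.iterate_injOn_Iio_minimalPeriod (f := f) (x := v)
  have hc : (Finset.range (minimalPeriod f v)).card ≤ (Finset.univ : Finset V).card := by
    apply Finset.card_le_card_of_injOn (fun k => f^[k] v) (fun _ _ => Finset.mem_univ _)
    intro a ha b hb hab
    exact h (by simpa using ha) (by simpa using hb) hab
  simpa using hc

lemma mem_pp_iff {f : V → V} {v : V} : v ∈ pp f ↔ v ∈ periodicPts f := by
  constructor
  · intro hv
    simp only [pp, Finset.mem_filter, Finset.mem_univ, true_and, Finset.Nonempty] at hv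
    obtain ⟨x, hx⟩ := hv
    simp only [Finset.mem_filter, Finset.mem_Icc] at hx
    exact mk_mem_periodicPts (Nat.lt_of_lt_of_le Nat.zero_lt_one hx.1.1) hx.2
  · intro hv
    simp only [pp, Finset.mem_filter, Finset.mem_univ, true_and, Finset.Nonempty]
    refine ⟨minimalPeriod f v, ?_⟩
    simp only [Finset.mem_filter, Finset.mem_Icc]
    exact ⟨⟨minimalPeriod_pos_of_mem_periodicPts hv, minimalPeriod_le_card f v⟩,
      iterate_minimalPeriod⟩

lemma mem_orb_iff {f : V → V} {v : V} (hv : v ∈ periodicPts f) {z : V} :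
    z ∈ orb f v ↔ ∃ j, f^[j] v = z := by
  constructor
  · rintro hz
    simp only [orb, Finset.mem_image, Finset.mem_range] at hz
    obtain ⟨k, _, hk⟩ := hz
    exact ⟨k, hk⟩
  · rintro ⟨j, rfl⟩
    simp only [orb, Finset.mem_image, Finset.mem_range]
    have hp := minimalPeriod_pos_of_mem_periodicPts hv
    exact ⟨j % minimalPeriod f v,
      lt_of_lt_of_le (Nat.mod_lt _ hp) (minimalPeriod_le_card f v),
      iterate_mod_minimalPeriod_eq⟩

lemma self_mem_orb {f : V → V} {v : V} (hv : v ∈ periodicPts f) : v ∈ orb f v :=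
  (mem_orb_iff hv).2 ⟨0, rfl⟩

lemma per_of_mem_orb {f : V → V} {v z : V} (hv : v ∈ periodicPts f) (hz : z ∈ orb f v) :
    z ∈ periodicPts f := by
  obtain ⟨j, rfl⟩ := (mem_orb_iff hv).1 hz
  obtain ⟨m, hm, hper⟩ := mem_periodicPts.1 hv
  exact mem_periodicPts.2 ⟨m, hm, hper.apply_iterate j⟩

lemma apply_mem_orb {f : V → V} {v z : V} (hv : v ∈ periodicPts f) (hz : z ∈ orb f v) :
    f z ∈ orb f v := by
  obtain ⟨j, rfl⟩ := (mem_orb_iff hv).1 hz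
  exact (mem_orb_iff hv).2 ⟨j + 1, (iterate_succ_apply' f j v)⟩

lemma orb_eq_of_mem {f : V → V} {v z : V} (hv : v ∈ periodicPts f) (hz : z ∈ orb f v) :
    orb f z = orb f v := by
  have hzp : z ∈ periodicPts f := per_of_mem_orb hv hz
  obtain ⟨k, hk⟩ := (mem_orb_iff hv).1 hz
  obtain ⟨m, hm, hper⟩ := mem_periodicPts.1 hv
  -- v ∈ orb f z
  have hvz : ∃ j, f^[j] z = v := by
    refine ⟨m * (k + 1) - k, ?_⟩
    have hle : k ≤ m * (k + 1) := le_trans (Nat.le_succ k) (Nat.le_mul_of_pos_left _ hm)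
    have : f^[m * (k + 1) - k] (f^[k] v) = f^[m * (k + 1)] v := by
      rw [← Function.iterate_add_apply, Nat.sub_add_cancel hle]
    rw [hk] at this
    rw [this]
    exact (hper.trans_dvd ⟨k + 1, rfl⟩)
  ext w
  rw [mem_orb_iff hzp, mem_orb_iff hv]
  constructor
  · rintro ⟨j, rfl⟩
    exact ⟨j + k, by rw [Function.iterate_add_apply, hk]⟩
  · rintro ⟨j, rfl⟩
    obtain ⟨i, hi⟩ := hvz
    exact ⟨j + i, by rw [Function.iterate_add_apply, hi]⟩

lemma inj_on_per {f : V → V} {x y : V} (hx : x ∈ periodicPts f) (hy : y ∈ periodicPts f)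
    (h : f x = f y) : x = y := by
  obtain ⟨a, ha, hpa⟩ := mem_periodicPts.1 hx
  obtain ⟨b, hb, hpb⟩ := mem_periodicPts.1 hy
  exact Function.IsPeriodicPt.eq_of_apply_eq hpa hpb ha hb h

lemma cyc_mem_elim {f : V → V} {η : Finset V} (hη : η ∈ cyc f) :
    ∃ v, v ∈ periodicPts f ∧ η = orb f v := by
  simp only [cyc, Finset.mem_image] at hη
  obtain ⟨v, hv, rfl⟩ := hη
  exact ⟨v, mem_pp_iff.1 hv, rfl⟩

lemma orb_mem_cyc {f : V → V} {v : V} (hv : v ∈ periodicPts f) : orb f v ∈ cyc f :=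
  Finset.mem_image_of_mem _ (mem_pp_iff.2 hv)

lemma cyc_eq_of_mem {f : V → V} {η η' : Finset V} (hη : η ∈ cyc f) (hη' : η' ∈ cyc f)
    {x : V} (hx : x ∈ η) (hx' : x ∈ η') : η = η' := by
  obtain ⟨v, hv, rfl⟩ := cyc_mem_elim hη
  obtain ⟨w, hw, rfl⟩ := cyc_mem_elim hη'
  rw [← orb_eq_of_mem hv hx, ← orb_eq_of_mem hw hx']




/-- the union of the members of `S` that are genuine cycles of `f` -/
def US (f : V → V) (S : Finset (Finset V)) : Finset V :=
  (S.filter (· ∈ cyc f)).biUnion id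

lemma mem_US_elim {f : V → V} {S : Finset (Finset V)} {x : V} (hx : x ∈ US f S) :
    ∃ η ∈ S, η ∈ cyc f ∧ x ∈ η := by
  simp only [US, Finset.mem_biUnion, Finset.mem_filter, id] at hx
  obtain ⟨η, ⟨h1, h2⟩, h3⟩ := hx
  exact ⟨η, h1, h2, h3⟩

lemma mem_US_intro {f : V → V} {S : Finset (Finset V)} {η : Finset V} {x : V}
    (h1 : η ∈ S) (h2 : η ∈ cyc f) (h3 : x ∈ η) : x ∈ US f S := by
  simp only [US, Finset.mem_biUnion, Finset.mem_filter, id]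
  exact ⟨η, ⟨h1, h2⟩, h3⟩

lemma per_of_mem_US {f : V → V} {S : Finset (Finset V)} {x : V} (hx : x ∈ US f S) :
    x ∈ periodicPts f := by
  obtain ⟨η, _, hc, hxη⟩ := mem_US_elim hx
  obtain ⟨v, hv, rfl⟩ := cyc_mem_elim hc
  exact per_of_mem_orb hv hxη

lemma apply_mem_US {f : V → V} {S : Finset (Finset V)} {x : V} (hx : x ∈ US f S) :
    f x ∈ US f S := by
  obtain ⟨η, h1, hc, hxη⟩ := mem_US_elim hx
  refine mem_US_intro h1 hc ?_
  obtain ⟨v, hv, rfl⟩ := cyc_mem_elim hc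
  exact apply_mem_orb hv hxη

lemma toFun_bij (f : V → V) (S : Finset (Finset V)) :
    Function.Bijective (fun x => if x ∈ US f S then f x else x) := by
  rw [← Finite.injective_iff_bijective]
  intro x y h
  dsimp only at h
  by_cases hx : x ∈ US f S <;> by_cases hy : y ∈ US f S <;>
    simp only [hx, hy, if_pos, if_neg, if_true, if_false] at h
  · exact inj_on_per (per_of_mem_US hx) (per_of_mem_US hy) h
  · exact absurd (h ▸ apply_mem_US hx) hy
  · exact absurd (h.symm ▸ apply_mem_US hy) hx
  · exact h

/-- the permutation of `V` acting as `f` on the cycles in `S` and as the identity elsewhere -/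
noncomputable def toPerm (f : V → V) (S : Finset (Finset V)) : Equiv.Perm V :=
  Equiv.ofBijective _ (toFun_bij f S)

lemma toPerm_apply (f : V → V) (S : Finset (Finset V)) (x : V) :
    toPerm f S x = if x ∈ US f S then f x else x := rfl

section FixFree

variable {f : V → V} (hf : ∀ x, f x ≠ x)

include hf

lemma support_toPerm (S : Finset (Finset V)) : (toPerm f S).support = US f S := by
  ext x
  rw [Equiv.Perm.mem_support, toPerm_apply]
  by_cases hx : x ∈ US f S <;> simp [hx, hf x]

end FixFree


section Compat

variable {f : V → V}

/-- iterates of a compatible permutation agree with `f` on the support -/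
lemma compat_iterate {σ : Equiv.Perm V} (hσ : ∀ i, σ i ≠ i → σ i = f i)
    {x : V} (hx : σ x ≠ x) (k : ℕ) : σ^[k] x = f^[k] x ∧ σ (σ^[k] x) ≠ σ^[k] x := by
  induction k with
  | zero => exact ⟨rfl, hx⟩
  | succ k ih =>
    obtain ⟨h1, h2⟩ := ih
    have h3 : σ (σ^[k] x) = f (f^[k] x) := by rw [hσ _ h2, h1]
    constructor
    · rw [Function.iterate_succ_apply', Function.iterate_succ_apply', h3]
    · rw [Function.iterate_succ_apply']
      intro hc
      exact h2 (σ.injective hc)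

lemma compat_support_per {σ : Equiv.Perm V} (hσ : ∀ i, σ i ≠ i → σ i = f i)
    {x : V} (hx : σ x ≠ x) : x ∈ periodicPts f := by
  have hord : σ^[orderOf σ] x = x := by
    rw [Equiv.Perm.iterate_eq_pow, pow_orderOf_eq_one]; rfl
  exact mem_periodicPts.2 ⟨orderOf σ, orderOf_pos σ,
    by rw [IsPeriodicPt, IsFixedPt, ← (compat_iterate hσ hx (orderOf σ)).1, hord]⟩

lemma compat_orb_subset_support {σ : Equiv.Perm V} (hσ : ∀ i, σ i ≠ i → σ i = f i)
    {x : V} (hx : σ x ≠ x) : orb f x ⊆ σ.support := by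
  intro z hz
  obtain ⟨j, rfl⟩ := (mem_orb_iff (compat_support_per hσ hx)).1 hz
  rw [Equiv.Perm.mem_support, ← (compat_iterate hσ hx j).1]
  exact (compat_iterate hσ hx j).2

/-- the set of cycles of a compatible permutation -/
def Tset (f : V → V) (σ : Equiv.Perm V) : Finset (Finset V) :=
  (cyc f).filter (fun η => η ⊆ σ.support)

lemma support_eq_US_Tset {σ : Equiv.Perm V} (hσ : ∀ i, σ i ≠ i → σ i = f i) :
    σ.support = US f (Tset f σ) := by
  ext x
  constructor
  · intro hx
    rw [Equiv.Perm.mem_support] at hx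
    have hper : x ∈ periodicPts f := compat_support_per hσ hx
    refine mem_US_intro ?_ (orb_mem_cyc hper) (self_mem_orb hper)
    exact Finset.mem_filter.2 ⟨orb_mem_cyc hper, compat_orb_subset_support hσ hx⟩
  · intro hx
    obtain ⟨η, h1, _, h3⟩ := mem_US_elim hx
    exact (Finset.mem_filter.1 h1).2 h3

lemma toPerm_Tset {σ : Equiv.Perm V} (hσ : ∀ i, σ i ≠ i → σ i = f i) :
    toPerm f (Tset f σ) = σ := by
  ext x
  rw [toPerm_apply, ← support_eq_US_Tset hσ]
  by_cases hx : x ∈ σ.support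
  · rw [if_pos hx, ← hσ x (Equiv.Perm.mem_support.1 hx)]
  · rw [if_neg hx]
    exact (Equiv.Perm.notMem_support.1 hx).symm

lemma Tset_toPerm (hf : ∀ x, f x ≠ x) {S : Finset (Finset V)} (hS : S ⊆ cyc f) :
    Tset f (toPerm f S) = S := by
  ext η
  rw [Tset, Finset.mem_filter, support_toPerm hf]
  constructor
  · rintro ⟨hc, hsub⟩
    obtain ⟨v, hv, rfl⟩ := cyc_mem_elim hc
    obtain ⟨η', h1, h2, h3⟩ := mem_US_elim (hsub (self_mem_orb hv))
    rwa [cyc_eq_of_mem hc h2 (self_mem_orb hv) h3]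
  · intro hη
    exact ⟨hS hη, fun x hx => mem_US_intro hη (hS hη) hx⟩

lemma US_eq_biUnion {S : Finset (Finset V)} (hS : S ⊆ cyc f) :
    US f S = S.biUnion id := by
  rw [US, Finset.filter_true_of_mem (fun η hη => hS hη)]

lemma pairwiseDisjoint_of_subset_cyc {S : Finset (Finset V)} (hS : S ⊆ cyc f) :
    (S : Set (Finset V)).PairwiseDisjoint id := by
  intro η hη η' hη' hne
  simp only [Function.onFun, id]
  rw [Finset.disjoint_left]
  intro x hx hx'
  exact hne (cyc_eq_of_mem (hS hη) (hS hη') hx hx')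

end Compat


section Sign

variable {f : V → V}

lemma toPerm_empty : toPerm f ∅ = 1 := by
  ext x
  rw [toPerm_apply]
  simp [US]

lemma US_singleton {η : Finset V} (hη : η ∈ cyc f) : US f {η} = η := by
  rw [US]
  rw [Finset.filter_true_of_mem (by simpa using hη)]
  exact Finset.singleton_biUnion

lemma toPerm_insert {S : Finset (Finset V)} (hS : S ⊆ cyc f) {η : Finset V}
    (hη : η ∈ cyc f) (hηS : η ∉ S) :
    toPerm f (insert η S) = toPerm f {η} * toPerm f S := by
  have hdisj : ∀ x ∈ US f S, x ∉ η := by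
    intro x hx hxη
    obtain ⟨η', h1, h2, h3⟩ := mem_US_elim hx
    exact hηS ((cyc_eq_of_mem hη h2 hxη h3) ▸ h1)
  have hins : ∀ x, x ∈ US f (insert η S) ↔ x ∈ η ∨ x ∈ US f S := by
    intro x
    constructor
    · intro hx
      obtain ⟨η', h1, h2, h3⟩ := mem_US_elim hx
      rcases Finset.mem_insert.1 h1 with rfl | h1'
      · exact Or.inl h3
      · exact Or.inr (mem_US_intro h1' h2 h3)
    · rintro (hx | hx)
      · exact mem_US_intro (Finset.mem_insert_self _ _) hη hx
      · obtain ⟨η', h1, h2, h3⟩ := mem_US_elim hx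
        exact mem_US_intro (Finset.mem_insert_of_mem h1) h2 h3
  ext x
  rw [Equiv.Perm.mul_apply, toPerm_apply, toPerm_apply, toPerm_apply]
  by_cases hx1 : x ∈ η
  · have hx2 : x ∉ US f S := fun h => hdisj x h hx1
    have h3 : x ∈ US f (insert η S) := (hins x).2 (Or.inl hx1)
    have h4 : x ∈ US f {η} := by rw [US_singleton hη]; exact hx1
    simp [hx2, h3, h4]
  · by_cases hx2 : x ∈ US f S
    · have hfx : f x ∈ US f S := apply_mem_US hx2
      have h3 : x ∈ US f (insert η S) := (hins x).2 (Or.inr hx2)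
      have h4 : f x ∉ US f {η} := by rw [US_singleton hη]; exact hdisj _ hfx
      simp [hx2, h3, h4]
    · have h3 : x ∉ US f (insert η S) := fun h => ((hins x).1 h).elim hx1 hx2
      have h4 : x ∉ US f {η} := by rw [US_singleton hη]; exact hx1
      simp [hx2, h3, h4]

variable (hf : ∀ x, f x ≠ x)
include hf

lemma toPerm_single_iterate {η : Finset V} (hη : η ∈ cyc f) {v : V}
    (hv : v ∈ periodicPts f) (hηv : η = orb f v) (k : ℕ) :
    (toPerm f {η})^[k] v = f^[k] v := by
  induction k with
  | zero => rfl
  | succ k ih =>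
    rw [Function.iterate_succ_apply', Function.iterate_succ_apply', ih, toPerm_apply,
      if_pos]
    rw [US_singleton hη, hηv]
    exact (mem_orb_iff hv).2 ⟨k, rfl⟩

lemma isCycle_toPerm_single {η : Finset V} (hη : η ∈ cyc f) :
    (toPerm f {η}).IsCycle := by
  obtain ⟨v, hv, rfl⟩ := cyc_mem_elim hη
  refine ⟨v, ?_, ?_⟩
  · rw [toPerm_apply, if_pos (show v ∈ US f {orb f v} by
      rw [US_singleton hη]; exact self_mem_orb hv)]
    exact hf v
  · intro y hy
    have hy' : y ∈ US f {orb f v} := by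
      by_contra hc
      exact hy (by rw [toPerm_apply, if_neg hc])
    rw [US_singleton hη] at hy'
    obtain ⟨k, hk⟩ := (mem_orb_iff hv).1 hy'
    exact ⟨(k : ℤ), by
      rw [zpow_natCast, ← Equiv.Perm.iterate_eq_pow,
        toPerm_single_iterate hf hη hv rfl k, hk]⟩

lemma sign_toPerm_single {η : Finset V} (hη : η ∈ cyc f) :
    ((Equiv.Perm.sign (toPerm f {η}) : ℤ) : ℂ) = -(-1 : ℂ) ^ η.card := by
  rw [(isCycle_toPerm_single hf hη).sign, support_toPerm hf, US_singleton hη]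
  push_cast
  ring

lemma sign_toPerm : ∀ (S : Finset (Finset V)), S ⊆ cyc f →
    ((Equiv.Perm.sign (toPerm f S) : ℤ) : ℂ) = ∏ η ∈ S, (-(-1 : ℂ) ^ η.card) := by
  intro S
  induction S using Finset.induction_on with
  | empty => intro _; simp [toPerm_empty]
  | @insert η S hηS ih =>
    intro hS
    have hη : η ∈ cyc f := hS (Finset.mem_insert_self _ _)
    have hS' : S ⊆ cyc f := fun x hx => hS (Finset.mem_insert_of_mem hx)
    rw [toPerm_insert hS' hη hηS, Equiv.Perm.sign_mul, Finset.prod_insert hηS,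
      ← ih hS', ← sign_toPerm_single hf hη]
    push_cast
    ring

lemma prod_support_toPerm {S : Finset (Finset V)} (hS : S ⊆ cyc f) (h : V → ℂ) :
    ∏ i ∈ (toPerm f S).support, h i = ∏ η ∈ S, ∏ v ∈ η, h v := by
  rw [support_toPerm hf, US_eq_biUnion hS,
    Finset.prod_biUnion (pairwiseDisjoint_of_subset_cyc hS)]
  simp [id]

lemma inner_sum (ψ : V → ℂ) :
    ∑ σ ∈ Finset.univ.filter (fun σ : Equiv.Perm V => ∀ i, σ i ≠ i → σ i = f i),
      ((Equiv.Perm.sign σ : ℤ) : ℂ) * ∏ i ∈ σ.support, (-ψ i)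
    = ∏ η ∈ cyc f, (1 - ∏ v ∈ η, ψ v) := by
  have hrw : ∀ η ∈ cyc f, (1 - ∏ v ∈ η, ψ v) = ((-∏ v ∈ η, ψ v) + 1) := fun η _ => by ring
  rw [Finset.prod_congr rfl hrw, Finset.prod_add]
  simp only [Finset.prod_const_one, mul_one]
  refine Finset.sum_bij' (fun σ _ => Tset f σ) (fun S _ => toPerm f S) ?_ ?_ ?_ ?_ ?_
  · intro σ hσ
    exact Finset.mem_powerset.2 (Finset.filter_subset _ _)
  · intro S hS
    simp only [Finset.mem_filter, Finset.mem_univ, true_and]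
    intro i hi
    rw [toPerm_apply] at hi ⊢
    by_cases h : i ∈ US f S
    · rw [if_pos h]
    · exact absurd rfl (by rwa [if_neg h] at hi)
  · intro σ hσ
    simp only [Finset.mem_filter, Finset.mem_univ, true_and] at hσ
    exact toPerm_Tset hσ
  · intro S hS
    exact Tset_toPerm hf (Finset.mem_powerset.1 hS)
  · intro σ hσ
    simp only [Finset.mem_filter, Finset.mem_univ, true_and] at hσ
    have hTs : Tset f σ ⊆ cyc f := Finset.filter_subset _ _
    conv_lhs => rw [← toPerm_Tset hσ]
    rw [sign_toPerm hf _ hTs, prod_support_toPerm hf hTs, ← Finset.prod_mul_distrib]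
    refine Finset.prod_congr rfl fun η hη => ?_
    have : ∏ v ∈ η, (-ψ v) = (-1 : ℂ) ^ η.card * ∏ v ∈ η, ψ v := by
      rw [← Finset.prod_const, ← Finset.prod_mul_distrib]
      exact Finset.prod_congr rfl fun v _ => by ring
    rw [this]
    have h1 : (-1 : ℂ) ^ η.card * (-1 : ℂ) ^ η.card = 1 := by
      rw [← mul_pow]; norm_num
    calc -(-1 : ℂ) ^ η.card * ((-1 : ℂ) ^ η.card * ∏ v ∈ η, ψ v)
        = -(((-1 : ℂ) ^ η.card * (-1 : ℂ) ^ η.card) * ∏ v ∈ η, ψ v) := by ring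
      _ = -∏ v ∈ η, ψ v := by rw [h1, one_mul]

end Sign


section Main

variable (G : SimpleGraph V) [DecidableRel G.Adj] (c : Sym2 V → ℂ) (φ : V → V → ℂ)

/-- edge weight, extended by zero -/
noncomputable def aa : V → V → ℂ := fun v w => if G.Adj v w then c s(v, w) else 0

/-- the line bundle Laplacian -/
noncomputable def MM : Matrix V V ℂ := Matrix.of fun v u =>
  if v = u then ∑ w, if G.Adj v w then c s(v, w) else 0
  else if G.Adj u v then -c s(u, v) * φ u v else 0

/-- index finsets for the diagonal expansion -/
def tt (σ : Equiv.Perm V) (i : V) : Finset V := if σ i = i then Finset.univ else {σ i}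

/-- summand for the diagonal expansion -/
noncomputable def FF (σ : Equiv.Perm V) (i w : V) : ℂ := (if σ i = i then 1 else -φ i w) * aa G c i w

lemma MM_entry (σ : Equiv.Perm V) (i : V) :
    MM G c φ (σ i) i = ∑ w ∈ tt σ i, FF G c φ σ i w := by
  by_cases h : σ i = i
  · simp [MM, tt, FF, aa, h]
  · simp only [MM, Matrix.of_apply, if_neg h, tt, FF, aa, Finset.sum_singleton]
    by_cases hadj : G.Adj i (σ i) <;> simp [hadj] <;> ring

lemma prod_ite_support (σ : Equiv.Perm V) (h : V → ℂ) :
    (∏ i, (if σ i = i then 1 else h i)) = ∏ i ∈ σ.support, h i := by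
  rw [Equiv.Perm.support, Finset.prod_filter]
  exact Finset.prod_congr rfl fun i _ => by by_cases hi : σ i = i <;> simp [hi]

lemma step_det :
    (MM G c φ).det = ∑ g : V → V, (∏ i, aa G c i (g i)) *
      ∑ σ ∈ Finset.univ.filter (fun σ : Equiv.Perm V => ∀ i, σ i ≠ i → σ i = g i),
        ((Equiv.Perm.sign σ : ℤ) : ℂ) * ∏ i ∈ σ.support, (-φ i (g i)) := by
  rw [Matrix.det_apply]
  have h1 : ∀ σ : Equiv.Perm V, Equiv.Perm.sign σ • ∏ i, MM G c φ (σ i) i =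
      ∑ g ∈ Fintype.piFinset (tt σ), ((Equiv.Perm.sign σ : ℤ) : ℂ) *
        ∏ i, FF G c φ σ i (g i) := by
    intro σ
    rw [Finset.prod_congr rfl (fun i _ => MM_entry G c φ σ i), Finset.prod_univ_sum]
    simp [Units.smul_def, zsmul_eq_mul, Finset.mul_sum]
  rw [Finset.sum_congr rfl (fun σ _ => h1 σ)]
  have hcomm : ∀ (σ : Equiv.Perm V) (g : V → V),
      σ ∈ (Finset.univ : Finset (Equiv.Perm V)) ∧ g ∈ Fintype.piFinset (tt σ) ↔
      σ ∈ Finset.univ.filter (fun σ : Equiv.Perm V => ∀ i, σ i ≠ i → σ i = g i) ∧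
      g ∈ (Finset.univ : Finset (V → V)) := by
    intro σ g
    simp only [Finset.mem_univ, true_and, and_true, Fintype.mem_piFinset,
      Finset.mem_filter, tt]
    constructor
    · intro h i hi
      have := h i
      rw [if_neg hi] at this
      exact (Finset.mem_singleton.1 this).symm
    · intro h i
      by_cases hi : σ i = i
      · rw [if_pos hi]; exact Finset.mem_univ _
      · rw [if_neg hi]; exact Finset.mem_singleton.2 (h i hi).symm
  rw [Finset.sum_comm' hcomm]
  refine Finset.sum_congr rfl fun g _ => ?_
  rw [Finset.mul_sum]
  refine Finset.sum_congr rfl fun σ _ => ?_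
  have : (∏ i, FF G c φ σ i (g i)) =
      (∏ i ∈ σ.support, (-φ i (g i))) * ∏ i, aa G c i (g i) := by
    simp only [FF]
    rw [Finset.prod_mul_distrib, prod_ite_support]
  rw [this]
  ring

lemma main_aux (hφne : ∀ u v, G.Adj u v → φ u v ≠ 0)
    (hφinv : ∀ u v, G.Adj u v → φ v u = (φ u v)⁻¹) :
    (MM G c φ).det = ∑ f ∈ Finset.univ.filter
        (fun f : V → V => (∀ v, G.Adj v (f v)) ∧ ∀ v, f (f v) ≠ v),
      (∏ v, c s(v, f v)) * ∏ η ∈ cyc f, (1 - ∏ v ∈ η, φ v (f v)) := by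
  rw [step_det]
  -- restrict to functions along edges
  rw [← Finset.sum_subset (Finset.subset_univ
    (Finset.univ.filter (fun g : V → V => ∀ i, G.Adj i (g i))))
    (by
      intro g _ hg
      simp only [Finset.mem_filter, Finset.mem_univ, true_and, not_forall] at hg
      obtain ⟨i, hi⟩ := hg
      have : (∏ i, aa G c i (g i)) = 0 :=
        Finset.prod_eq_zero (Finset.mem_univ i) (by simp [aa, hi])
      rw [this, zero_mul])]
  -- evaluate the inner sum
  have hev : ∀ g ∈ Finset.univ.filter (fun g : V → V => ∀ i, G.Adj i (g i)),
      (∏ i, aa G c i (g i)) *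
      (∑ σ ∈ Finset.univ.filter (fun σ : Equiv.Perm V => ∀ i, σ i ≠ i → σ i = g i),
        ((Equiv.Perm.sign σ : ℤ) : ℂ) * ∏ i ∈ σ.support, (-φ i (g i))) =
      (∏ i, aa G c i (g i)) * ∏ η ∈ cyc g, (1 - ∏ v ∈ η, φ v (g v)) := by
    intro g hg
    simp only [Finset.mem_filter, Finset.mem_univ, true_and] at hg
    have hf : ∀ x, g x ≠ x := fun x => (hg x).ne'
    rw [inner_sum hf (fun i => φ i (g i))]
  rw [Finset.sum_congr rfl hev]
  -- restrict further to OCRSFs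
  rw [← Finset.sum_subset
    (show Finset.univ.filter (fun f : V → V => (∀ v, G.Adj v (f v)) ∧ ∀ v, f (f v) ≠ v) ⊆
        Finset.univ.filter (fun g : V → V => ∀ i, G.Adj i (g i)) from by
      intro g hg
      simp only [Finset.mem_filter, Finset.mem_univ, true_and] at hg ⊢
      exact hg.1)
    (by
      intro g hg1 hg2
      simp only [Finset.mem_filter, Finset.mem_univ, true_and] at hg1 hg2
      push_neg at hg2
      obtain ⟨v, hvv⟩ := hg2 hg1
      have hfv : g v ≠ v := (hg1 v).ne'
      have hper : v ∈ periodicPts g := by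
        refine mem_periodicPts.2 ⟨2, two_pos, ?_⟩
        show g^[2] v = v
        rw [show (2 : ℕ) = 1 + 1 from rfl, Function.iterate_add_apply]
        simpa using hvv
      have horb : orb g v = {v, g v} := by
        ext z
        rw [mem_orb_iff hper]
        constructor
        · rintro ⟨j, rfl⟩
          have : ∀ j : ℕ, g^[j] v = v ∨ g^[j] v = g v := by
            intro j
            induction j with
            | zero => exact Or.inl rfl
            | succ j ih =>
              rw [Function.iterate_succ_apply']
              rcases ih with h | h
              · rw [h]; exact Or.inr rfl
              · rw [h, hvv]; exact Or.inl rfl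
          rcases this j with h | h <;> simp [h]
        · intro hz
          rcases Finset.mem_insert.1 hz with rfl | hz
          · exact ⟨0, rfl⟩
          · exact ⟨1, by simpa using (Finset.mem_singleton.1 hz).symm⟩
      have hm : (∏ x ∈ orb g v, φ x (g x)) = 1 := by
        rw [horb, Finset.prod_pair (Ne.symm hfv), hvv,
          hφinv v (g v) (hg1 v)]
        exact mul_inv_cancel₀ (hφne v (g v) (hg1 v))
      have : (∏ η ∈ cyc g, (1 - ∏ v ∈ η, φ v (g v))) = 0 :=
        Finset.prod_eq_zero (orb_mem_cyc hper) (by rw [hm]; ring)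
      rw [this, mul_zero])]
  refine Finset.sum_congr rfl fun g hg => ?_
  simp only [Finset.mem_filter, Finset.mem_univ, true_and] at hg
  congr 1
  exact Finset.prod_congr rfl fun i _ => by simp [aa, hg.1 i]

end Main

end OCRSFAux

/-- Forman's theorem / the OCRSF expansion of the determinant of the line bundle Laplacian:
`det Δ = Σ_γ wt(γ) Π_η (1 − m(η))`, where the sum runs over oriented cycle rooted spanning
forests of `G` and the product over the oriented cycles `η` of `γ`, with `m(η)` the monodromy
of the connection `φ` around `η`.

An OCRSF is encoded by the function `f : V → V` sending each vertex to the head of its unique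
outgoing edge (tree edges oriented towards the cycle of their component, cycle edges oriented
by the chosen orientation); the conditions `G.Adj v (f v)` and `f (f v) ≠ v` characterize
exactly such encodings.  The cycles of `γ` are the orbits of `f` on its periodic points, and
the monodromy of a cycle `η` is `Π_{v ∈ η} φ v (f v)`. -/
theorem det_lineBundleLaplacian_eq_sum_ocrsf {V : Type*} [Fintype V] [DecidableEq V]
    (G : SimpleGraph V) [DecidableRel G.Adj]
    (c : Sym2 V → ℂ) (φ : V → V → ℂ)
    (hφne : ∀ u v, G.Adj u v → φ u v ≠ 0)
    (hφinv : ∀ u v, G.Adj u v → φ v u = (φ u v)⁻¹) :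
    let Δ : Matrix V V ℂ := Matrix.of fun v u =>
      if v = u then ∑ w, if G.Adj v w then c s(v, w) else 0
      else if G.Adj u v then -c s(u, v) * φ u v else 0
    let ocrsfs : Finset (V → V) :=
      Finset.univ.filter fun f => (∀ v, G.Adj v (f v)) ∧ ∀ v, f (f v) ≠ v
    let periodicPts : (V → V) → Finset V := fun f =>
      Finset.univ.filter fun v =>
        ((Finset.Icc 1 (Fintype.card V)).filter fun n => f^[n] v = v).Nonempty
    let orbit : (V → V) → V → Finset V := fun f v =>
      Finset.image (fun k => f^[k] v) (Finset.range (Fintype.card V))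
    let cycles : (V → V) → Finset (Finset V) := fun f => Finset.image (orbit f) (periodicPts f)
    Δ.det = ∑ f ∈ ocrsfs,
      (∏ v, c s(v, f v)) * ∏ η ∈ cycles f, (1 - ∏ v ∈ η, φ v (f v)) := by
  intro Δ ocrsfs periodicPts orbit cycles
  exact OCRSFAux.main_aux G c φ hφne hφinv
end
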